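/- If w is an affine signed permutation in the group S̃^C_n that is not the identity, then there exist integers x and y with x ≢ y (mod 2n+2), neither x nor y a multiple of n+1, such that w(x) ≥ y > x ≥ w(y). -/

import Mathlib

/-- An affine signed permutation in `S̃^C_n`: a bijection `w : ℤ → ℤ` with
`w(−i) = −w(i)` and `w(i + (2n+2)) = w(i) + (2n+2)` for all `i ∈ ℤ`. -/
def IsAffCPerm (n : ℕ) (w : Equiv.Perm ℤ) : Prop :=
  (∀ i : ℤ, w (-i) = - w i) ∧
  (∀ i : ℤ, w (i + (2 * (n : ℤ) + 2)) = w i + (2 * (n : ℤ) + 2))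

/-- Sum of distinct integers all `≥ m` is at least the sum of the first `card` values. -/
lemma aux_sum_distinct_ge (k : ℕ) : ∀ (S : Finset ℤ) (m : ℤ), S.card = k →
    (∀ s ∈ S, m ≤ s) → (∑ i ∈ Finset.range k, (m + (i : ℤ))) ≤ ∑ s ∈ S, s := by
  induction k with
  | zero =>
    intro S m hc _
    rw [Finset.card_eq_zero] at hc
    simp [hc]
  | succ k ih =>
    intro S m hc hm
    have hne : S.Nonempty := Finset.card_pos.mp (by omega)
    have hs0S : S.min' hne ∈ S := S.min'_mem hne
    set s0 := S.min' hne with hs0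
    have hcard' : (S.erase s0).card = k := by
      rw [Finset.card_erase_of_mem hs0S, hc]
      omega
    have hms0 : m ≤ s0 := hm s0 hs0S
    have hge : ∀ s ∈ S.erase s0, m + 1 ≤ s := by
      intro s hs
      have h1 : s0 ≤ s := S.min'_le s (Finset.mem_of_mem_erase hs)
      have h2 : s ≠ s0 := Finset.ne_of_mem_erase hs
      omega
    have hih := ih (S.erase s0) (m + 1) hcard' hge
    have hsum : ∑ s ∈ S, s = s0 + ∑ s ∈ S.erase s0, s :=
      (Finset.add_sum_erase S id hs0S).symm
    have hr : ∑ i ∈ Finset.range (k + 1), (m + (i : ℤ))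
        = m + ∑ i ∈ Finset.range k, (m + 1 + (i : ℤ)) := by
      rw [Finset.sum_range_succ']
      push_cast
      rw [Finset.sum_congr rfl (g := fun i : ℕ => m + 1 + (i : ℤ))
        (fun i _ => by push_cast; ring)]
      ring
    omega

theorem exists_good_pair_affineC (n : ℕ) (w : Equiv.Perm ℤ)
    (hw : IsAffCPerm n w) (hne : w ≠ 1) :
    ∃ x y : ℤ, ¬ ((2 * (n : ℤ) + 2) ∣ (y - x)) ∧
      ¬ (((n : ℤ) + 1) ∣ x) ∧ ¬ (((n : ℤ) + 1) ∣ y) ∧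
      y ≤ w x ∧ x < y ∧ w y ≤ x := by
  obtain ⟨hodd, hper⟩ := hw
  set N : ℤ := 2 * (n : ℤ) + 2 with hN
  have hNpos : 0 < N := by positivity
  -- periodicity by any multiple of N
  have hperk : ∀ (i k : ℤ), w (i + k * N) = w i + k * N := by
    intro i k
    induction k using Int.induction_on with
    | zero => simp
    | succ k ih =>
      have h1 : i + ((k : ℤ) + 1) * N = (i + k * N) + N := by ring
      rw [h1, hper, ih]; ring
    | pred k ih =>
      have h1 : i + (-(k : ℤ) - 1) * N + N = i + (-(k : ℤ)) * N := by ring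
      have := hper (i + (-(k : ℤ) - 1) * N)
      rw [h1] at this
      have : w (i + (-(k : ℤ) - 1) * N) = w (i + (-(k : ℤ)) * N) - N := by omega
      rw [this, ih]; ring
  -- multiples of n+1 are fixed
  have hfix : ∀ j : ℤ, ((n : ℤ) + 1) ∣ j → w j = j := by
    rintro j ⟨k, hk⟩
    have h2 : -j = j + (-k) * N := by rw [hk, hN]; ring
    have h3 : w (-j) = w j + (-k) * N := by rw [h2, hperk]
    have h4 : w (-j) = - w j := hodd j
    have h7 : (-k) * N = -(k * N) := by ring
    have h5 : 2 * w j = k * N := by omega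
    have h6 : 2 * j = k * N := by rw [hk, hN]; ring
    omega
  -- displacement bounded above by d, the maximum over a period
  classical
  set D : Finset ℤ := (Finset.Icc (0 : ℤ) (N - 1)).image (fun r => w r - r) with hD
  have hDne : D.Nonempty := by
    refine ⟨w 0 - 0, ?_⟩
    rw [hD]
    exact Finset.mem_image_of_mem _ (by simp; omega)
  set d : ℤ := D.max' hDne with hd
  have hbound : ∀ j : ℤ, w j - j ≤ d := by
    intro j
    have h0 : N * (j / N) + j % N = j := Int.mul_ediv_add_emod j N
    rw [mul_comm] at h0
    have h1 : 0 ≤ j % N := Int.emod_nonneg j (by omega)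
    have h2 : j % N < N := Int.emod_lt_of_pos j hNpos
    have h3 : j = j % N + (j / N) * N := by omega
    have h4 := hperk (j % N) (j / N)
    rw [← h3] at h4
    have h5 : w (j % N) - (j % N) ∈ D := by
      rw [hD]
      refine Finset.mem_image_of_mem _ ?_
      simp only [Finset.mem_Icc]
      omega
    have := D.le_max' _ h5
    omega
  have hlow : ∀ j : ℤ, -d ≤ w j - j := by
    intro j
    have := hbound (-j)
    rw [hodd j] at this
    omega
  -- there is a point with positive displacement, so d ≥ 1
  have hex : ∃ a : ℤ, w a ≠ a := by
    by_contra h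
    push_neg at h
    exact hne (Equiv.ext fun i => h i)
  obtain ⟨a, ha⟩ := hex
  have hd1 : 1 ≤ d := by
    rcases lt_or_gt_of_ne ha with h | h
    · have h2 : w (-a) = -w a := hodd a
      have := hbound (-a)
      omega
    · have := hbound a
      omega
  -- a point x achieving the maximal displacement d
  have hxex : ∃ x : ℤ, w x - x = d := by
    have hmem : d ∈ D := D.max'_mem hDne
    rw [hD] at hmem
    simp only [Finset.mem_image] at hmem
    obtain ⟨r, _, hr⟩ := hmem
    exact ⟨r, by rw [hr]⟩
  obtain ⟨x, hx⟩ := hxex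
  -- sum of displacements over a window of length N is zero
  have hsplitL : ∀ (a b : ℤ), a ≤ b →
      ∑ j ∈ Finset.Icc a b, (w j - j) = (w a - a) + ∑ j ∈ Finset.Icc (a+1) b, (w j - j) := by
    intro a b hab
    have he : (Finset.Icc a b).erase a = Finset.Icc (a+1) b := by
      ext j; simp only [Finset.mem_erase, Finset.mem_Icc]; omega
    rw [← Finset.add_sum_erase _ _ (Finset.mem_Icc.mpr ⟨le_refl a, hab⟩), he]
  have hsplitR : ∀ (a b : ℤ), a ≤ b →
      ∑ j ∈ Finset.Icc a b, (w j - j) = (∑ j ∈ Finset.Icc a (b-1), (w j - j)) + (w b - b) := by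
    intro a b hab
    have he : (Finset.Icc a b).erase b = Finset.Icc a (b-1) := by
      ext j; simp only [Finset.mem_erase, Finset.mem_Icc]; omega
    rw [← Finset.sum_erase_add _ _ (Finset.mem_Icc.mpr ⟨hab, le_refl b⟩), he]
  set g : ℤ → ℤ := fun c => ∑ j ∈ Finset.Icc (c+1) (c+N), (w j - j) with hg
  have hgstep : ∀ c : ℤ, g (c + 1) = g c := by
    intro c
    have h1 : g c = (w (c+1) - (c+1)) + ∑ j ∈ Finset.Icc (c+2) (c+N), (w j - j) := by
      simp only [hg]
      have h0 := hsplitL (c+1) (c+N) (by omega)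
      rw [show c+1+1 = c+2 from by ring] at h0
      exact h0
    have h2 : g (c+1) = (∑ j ∈ Finset.Icc (c+2) (c+N), (w j - j)) + (w (c+1+N) - (c+1+N)) := by
      simp only [hg]
      rw [show c + 1 + 1 = c + 2 from by ring]
      have h3 := hsplitR (c+2) (c+1+N) (by omega)
      rw [show c+1+N-1 = c+N from by ring] at h3
      exact h3
    have h4 : w (c+1+N) = w (c+1) + N := by
      have := hperk (c+1) 1
      rw [one_mul] at this
      rw [← this]
    rw [h1, h2, h4]; ring
  have hgc : ∀ c : ℤ, g c = g (-(n:ℤ) - 1) := by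
    have key : ∀ k : ℤ, g (-(n:ℤ) - 1 + k) = g (-(n:ℤ) - 1) := by
      intro k
      induction k using Int.induction_on with
      | zero => simp
      | succ k ih =>
        rw [show -(n:ℤ) - 1 + ((k:ℤ)+1) = (-(n:ℤ) - 1 + k) + 1 by ring, hgstep, ih]
      | pred k ih =>
        have h := hgstep (-(n:ℤ) - 1 + (-(k:ℤ)-1))
        rw [show -(n:ℤ) - 1 + (-(k:ℤ)-1) + 1 = -(n:ℤ) - 1 + -(k:ℤ) from by ring] at h
        rw [← h]
        exact ih
    intro c
    have := key (c + (n:ℤ) + 1)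
    rw [show -(n:ℤ) - 1 + (c + (n:ℤ) + 1) = c by ring] at this
    exact this
  have hgbase : g (-(n:ℤ) - 1) = 0 := by
    simp only [hg]
    rw [show -(n:ℤ) - 1 + 1 = -(n:ℤ) by ring, show -(n:ℤ) - 1 + N = (n:ℤ) + 1 by rw [hN]; ring]
    refine Finset.sum_involution (fun a _ => if a = (n:ℤ)+1 then a else -a) ?_ ?_ ?_ ?_
    · intro a ha
      beta_reduce
      by_cases h : a = (n:ℤ)+1
      · rw [if_pos h, h]
        have hf : w ((n:ℤ)+1) = (n:ℤ)+1 := hfix _ ⟨1, by ring⟩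
        omega
      · rw [if_neg h]
        have := hodd a
        omega
    · intro a ha hfa
      beta_reduce
      by_cases h : a = (n:ℤ)+1
      · exfalso
        have hf : w ((n:ℤ)+1) = (n:ℤ)+1 := hfix _ ⟨1, by ring⟩
        rw [h] at hfa
        omega
      · rw [if_neg h]
        intro h2
        have ha0 : a = 0 := by omega
        have hf : w 0 = 0 := hfix 0 ⟨0, by ring⟩
        rw [ha0] at hfa
        omega
    · intro a ha
      beta_reduce
      simp only [Finset.mem_Icc] at ha
      by_cases h : a = (n:ℤ)+1
      · rw [if_pos h]
        simp only [Finset.mem_Icc]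
        omega
      · rw [if_neg h]
        simp only [Finset.mem_Icc]
        omega
    · intro a ha
      beta_reduce
      simp only [Finset.mem_Icc] at ha
      by_cases h : a = (n:ℤ)+1
      · simp [h]
      · rw [if_neg h]
        have h2 : ¬ (-a = (n:ℤ)+1) := by omega
        rw [if_neg h2]
        simp
  have hwin : ∀ c : ℤ, ∑ j ∈ Finset.Icc (c+1) (c+N), (w j - j) = 0 := by
    intro c
    have := hgc c
    rw [hgbase] at this
    exact this
  -- main claim: there exists y > x with w y ≤ x
  have hBex : ∃ y : ℤ, x < y ∧ w y ≤ x := by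
    by_contra hB
    push_neg at hB
    -- so for all j > x, w j > x
    have hB' : ∀ j : ℤ, x < j → x < w j := fun j hj => hB j hj
    set T : Finset ℤ := Finset.Icc (x+1) (x+N) with hT
    set S : Finset ℤ := T.image w with hS
    have hTeq : T = (Finset.range (2*n+2)).image (fun i : ℕ => x + 1 + (i : ℤ)) := by
      ext t
      simp only [hT, Finset.mem_Icc, Finset.mem_image, Finset.mem_range]
      constructor
      · rintro ⟨h1, h2⟩
        refine ⟨(t - (x+1)).toNat, by omega, ?_⟩
        show x + 1 + ((t - (x+1)).toNat : ℤ) = t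
        omega
      · rintro ⟨i, hi, rfl⟩
        omega
    have hinj1 : Function.Injective (fun i : ℕ => x + 1 + (i : ℤ)) := by
      intro i j hij; simpa using hij
    have hTcard : T.card = 2*n+2 := by
      rw [hTeq, Finset.card_image_of_injective _ hinj1, Finset.card_range]
    have hScard : S.card = 2*n+2 := by
      rw [hS, Finset.card_image_of_injective _ w.injective, hTcard]
    have hSge : ∀ s ∈ S, x + 1 ≤ s := by
      intro s hs
      rw [hS] at hs
      simp only [Finset.mem_image, hT, Finset.mem_Icc] at hs
      obtain ⟨t, ⟨ht1, _⟩, rfl⟩ := hs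
      have := hB' t (by omega)
      omega
    have hTsum : ∑ t ∈ T, t = ∑ i ∈ Finset.range (2*n+2), (x + 1 + (i:ℤ)) := by
      rw [hTeq, Finset.sum_image (fun a _ b _ h => hinj1 h)]
    have hSsum : ∑ s ∈ S, s = ∑ t ∈ T, t := by
      rw [hS, Finset.sum_image (fun a _ b _ h => w.injective h)]
      have h0 := hwin x
      have h1 : ∑ t ∈ T, (w t - t) = 0 := by rw [hT]; exact h0
      have h2 : ∑ t ∈ T, (w t - t) = (∑ t ∈ T, w t) - ∑ t ∈ T, t := by
        rw [Finset.sum_sub_distrib]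
      omega
    -- every element of S is at most x + N
    have hSsub : S ⊆ T := by
      intro s0 hs0
      rw [hT, Finset.mem_Icc]
      refine ⟨hSge s0 hs0, ?_⟩
      by_contra hbig
      push_neg at hbig
      have hbig' : x + N + 1 ≤ s0 := by omega
      have hec : (S.erase s0).card = 2*n+1 := by
        rw [Finset.card_erase_of_mem hs0, hScard]
        omega
      have hege : ∀ s ∈ S.erase s0, x + 1 ≤ s := fun s hs =>
        hSge s (Finset.mem_of_mem_erase hs)
      have hle := aux_sum_distinct_ge (2*n+1) (S.erase s0) (x+1) hec hege
      have hsum0 : ∑ s ∈ S, s = s0 + ∑ s ∈ S.erase s0, s :=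
        (Finset.add_sum_erase S id hs0).symm
      have hrs : ∑ i ∈ Finset.range (2*n+2), (x + 1 + (i:ℤ))
          = (∑ i ∈ Finset.range (2*n+1), (x + 1 + (i:ℤ))) + (x + 1 + (2*(n:ℤ)+1)) := by
        rw [Finset.sum_range_succ]
        push_cast
        ring
      have hNle : x + 1 + (2*(n:ℤ)+1) = x + N := by rw [hN]; ring
      rw [hSsum, hTsum, hrs, hNle] at hsum0
      omega
    have hST : S = T := Finset.eq_of_subset_of_card_le hSsub (by omega)
    -- hence every t > x has a preimage > x
    have hpre : ∀ t : ℤ, x < t → ∃ j : ℤ, x < j ∧ w j = t := by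
      intro t ht
      set k : ℤ := (t - x - 1) / N with hk
      set r : ℤ := (t - x - 1) % N with hr
      have h0 : N * k + r = t - x - 1 := Int.mul_ediv_add_emod (t - x - 1) N
      rw [mul_comm] at h0
      have h1 : 0 ≤ r := Int.emod_nonneg _ (by omega)
      have h2 : r < N := Int.emod_lt_of_pos _ hNpos
      have hk0 : 0 ≤ k := Int.ediv_nonneg (by omega) (by omega)
      have ht0 : x + 1 + r ∈ T := by rw [hT, Finset.mem_Icc]; omega
      have ht0S : x + 1 + r ∈ S := by rw [hST]; exact ht0
      rw [hS] at ht0S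
      simp only [Finset.mem_image, hT, Finset.mem_Icc] at ht0S
      obtain ⟨j0, ⟨hj1, hj2⟩, hj3⟩ := ht0S
      refine ⟨j0 + k * N, by nlinarith, ?_⟩
      rw [hperk, hj3]
      omega
    obtain ⟨j0, hj0, hj0w⟩ := hpre (x + d) (by omega)
    have : j0 = x := w.injective (by rw [hj0w]; omega)
    omega
  obtain ⟨y, hy1, hy2⟩ := hBex
  refine ⟨x, y, ?_, ?_, ?_, ?_, hy1, hy2⟩
  · rintro ⟨k, hk⟩
    rw [mul_comm] at hk
    have hkN : 0 < k * N := by omega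
    have hwy : w y = w x + k * N := by
      rw [show y = x + k * N from by omega, hperk]
    omega
  · intro hdvd
    have := hfix x hdvd
    omega
  · intro hdvd
    have := hfix y hdvd
    omega
  · have := hlow y
    omega
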